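/- A matrix B ∈ GL(3,ℤ) commutes with A = [[0,1,1],[2,1,0],[1,0,−1]] if and only if B has the form [[c₁+2c₂+c₃, c₁+2c₂, c₁],[2c₁+4c₂, 2c₁+3c₂+c₃, 2c₂],[c₁, c₂, c₃]] for some integers c₁, c₂, c₃. -/

import Mathlib

open Matrix

/-- An integer matrix `B` commutes with `A = !![0,1,1; 2,1,0; 1,0,-1]` if and only if it
has the stated three-parameter form. -/
theorem centralizer_of_A_characterization (B : Matrix (Fin 3) (Fin 3) ℤ) :
    (!![0, 1, 1; 2, 1, 0; 1, 0, -1] : Matrix (Fin 3) (Fin 3) ℤ) * B =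
      B * (!![0, 1, 1; 2, 1, 0; 1, 0, -1] : Matrix (Fin 3) (Fin 3) ℤ) ↔
    ∃ c₁ c₂ c₃ : ℤ, B =
      !![c₁ + 2 * c₂ + c₃, c₁ + 2 * c₂, c₁;
         2 * c₁ + 4 * c₂, 2 * c₁ + 3 * c₂ + c₃, 2 * c₂;
         c₁, c₂, c₃] := by
  constructor
  · intro h
    have h' : ∀ i j : Fin 3, ((!![0, 1, 1; 2, 1, 0; 1, 0, -1] : Matrix (Fin 3) (Fin 3) ℤ) * B) i j
        = (B * (!![0, 1, 1; 2, 1, 0; 1, 0, -1] : Matrix (Fin 3) (Fin 3) ℤ)) i j := fun i j => by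
      rw [h]
    simp only [Matrix.mul_apply, Fin.sum_univ_three] at h'
    have e00 := h' 0 0; have e01 := h' 0 1; have e02 := h' 0 2
    have e10 := h' 1 0; have e11 := h' 1 1; have e12 := h' 1 2
    have e20 := h' 2 0; have e21 := h' 2 1; have e22 := h' 2 2
    norm_num [Matrix.cons_val_zero, Matrix.cons_val_one, Matrix.cons_val_two, Matrix.tail_cons, Matrix.head_cons] at e00 e01 e02 e10 e11 e12 e20 e21 e22
    refine ⟨B 2 0, B 2 1, B 2 2, ?_⟩
    ext i j
    fin_cases i <;> fin_cases j <;> simp <;> linarith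
  · rintro ⟨c₁, c₂, c₃, rfl⟩
    ext i j
    fin_cases i <;> fin_cases j <;>
      simp [Matrix.mul_apply, Fin.sum_univ_three] <;> ring
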